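/- Consider the 2-odometer self-similar group (ℤ, {0,1}) extended by a symbol B: X_B = {0,1,B}, with z·0 = 1, z|_0 = e; z·1 = 0, z|_1 = z; z·B = B, z|_B = e. For every nonzero integer m, the set MSF_{z^m} of minimal strongly fixed words for z^m is finite. In particular, for m > 0, every minimal strongly fixed word has the form βB with β ∈ {0,1}*, z^m·β = β, and z^m·β = β holds if and only if 2^{|β|} divides m; hence |β| ≤ log₂(m). -/

import Mathlib

/-- A self-similar group `(G, X)`: a length-preserving action of `G` on the free
monoid `X*` (words modeled as lists) together with restriction maps, satisfying the
self-similarity identities `g·(uv) = (g·u)(g|_u · v)`, `g|_{uv} = (g|_u)|_v`, etc. -/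
structure SelfSimilar (G X : Type*) [Group G] where
  act : G → List X → List X
  res : G → List X → G
  length_act : ∀ (g : G) (w : List X), (act g w).length = w.length
  act_one : ∀ w : List X, act 1 w = w
  act_mul : ∀ (g h : G) (w : List X), act (g * h) w = act g (act h w)
  act_append : ∀ (g : G) (u v : List X), act g (u ++ v) = act g u ++ act (res g u) v
  res_nil : ∀ g : G, res g [] = g
  res_append : ∀ (g : G) (u v : List X), res g (u ++ v) = res (res g u) v
  res_one : ∀ w : List X, res 1 w = 1
  res_mul : ∀ (g h : G) (w : List X), res (g * h) w = res g (act h w) * res h w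

/-- The set of words strongly fixed by `g`: `g·α = α` and `g|_α = 1`. -/
def SF {G X : Type*} [Group G] (SS : SelfSimilar G X) (g : G) : Set (List X) :=
  {α | SS.act g α = α ∧ SS.res g α = 1}

/-- The set of minimal strongly fixed words of `g`: strongly fixed words no proper
prefix of which is strongly fixed. -/
def MSF {G X : Type*} [Group G] (SS : SelfSimilar G X) (g : G) : Set (List X) :=
  {α | α ∈ SF SS g ∧ ∀ β : List X, β <+: α → β ≠ α → β ∉ SF SS g}

/-- The alphabet `{0, 1, B}` of the modified odometer. -/
inductive XB : Type
  | zero : XB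
  | one : XB
  | B : XB
deriving DecidableEq

/-- The generator `z` of `ℤ` (written multiplicatively). -/
abbrev oz : Multiplicative ℤ := Multiplicative.ofAdd 1

/- ===== auxiliary development ===== -/

instance : Fintype XB := ⟨{XB.zero, XB.one, XB.B}, by intro x; cases x <;> simp⟩

/-- action of z^m on a single letter -/
def lact (m : ℤ) : XB → XB
  | XB.zero => if m % 2 = 0 then XB.zero else XB.one
  | XB.one  => if m % 2 = 0 then XB.one else XB.zero
  | XB.B    => XB.B

/-- restriction of z^m at a single letter (exponent) -/
def lres (m : ℤ) : XB → ℤ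
  | XB.zero => m / 2
  | XB.one  => (m + 1) / 2
  | XB.B    => 0

def mact (m : ℤ) : List XB → List XB
  | [] => []
  | x :: w => lact m x :: mact (lres m x) w

def mres : ℤ → List XB → ℤ
  | m, [] => m
  | m, x :: w => mres (lres m x) w

lemma ozpow_inj {a b : ℤ} (h : oz ^ a = oz ^ b) : a = b := by
  have := congrArg Multiplicative.toAdd h
  simpa [toAdd_zpow] using this

lemma ozpow_eq_one {a : ℤ} : oz ^ a = 1 ↔ a = 0 := by
  constructor
  · intro h; exact ozpow_inj (a := a) (b := 0) (by simpa using h)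
  · rintro rfl; simp

lemma lres_zero (x : XB) : lres 0 x = 0 := by cases x <;> simp [lres]

lemma lact_zero (x : XB) : lact 0 x = x := by cases x <;> simp [lact]

lemma mact_zero (w : List XB) : mact 0 w = w := by
  induction w with
  | nil => rfl
  | cons x w ih => simp [mact, lact_zero, lres_zero, ih]

lemma mres_zero (w : List XB) : mres 0 w = 0 := by
  induction w with
  | nil => rfl
  | cons x w ih => simp [mres, lres_zero, ih]

lemma mact_length (m : ℤ) (w : List XB) : (mact m w).length = w.length := by
  induction w generalizing m with
  | nil => rfl
  | cons x w ih => simp [mact, ih]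

lemma mact_append (m : ℤ) (u v : List XB) :
    mact m (u ++ v) = mact m u ++ mact (mres m u) v := by
  induction u generalizing m with
  | nil => rfl
  | cons x u ih => simp [mact, mres, ih]

lemma mres_append (m : ℤ) (u v : List XB) :
    mres m (u ++ v) = mres (mres m u) v := by
  induction u generalizing m with
  | nil => rfl
  | cons x u ih => simp [mres, ih]

/-- Fixing a B-free word is equivalent to divisibility by 2^length. -/
lemma mact_fix_iff : ∀ (w : List XB), XB.B ∉ w → ∀ m : ℤ,
    (mact m w = w ↔ (2:ℤ) ^ w.length ∣ m) := by
  intro w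
  induction w with
  | nil => intro _ m; simp [mact]
  | cons x w ih =>
    intro hB m
    have hxB : x ≠ XB.B := fun h => hB (by simp [h])
    have hwB : XB.B ∉ w := fun h => hB (by simp [h])
    have key : m % 2 = 0 → (2:ℤ) ^ w.length ∣ m / 2 →
        (2:ℤ) ^ (w.length + 1) ∣ m := by
      rintro h2 ⟨c, hc⟩
      refine ⟨c, ?_⟩
      have hr : (2:ℤ) ^ (w.length + 1) * c = 2 * (2 ^ w.length * c) := by
        rw [pow_succ]; ring
      omega
    have key2 : (2:ℤ) ^ (w.length + 1) ∣ m → m % 2 = 0 ∧ (2:ℤ) ^ w.length ∣ m / 2 := by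
      rintro ⟨c, hc⟩
      rw [pow_succ] at hc
      set s : ℤ := 2 ^ w.length * c with hs
      have hm : m = 2 * s := by rw [hs]; linarith [hc]
      refine ⟨by omega, ?_⟩
      have : m / 2 = s := by omega
      rw [this]; exact ⟨c, hs⟩
    cases x with
    | zero =>
      simp only [mact, lact, lres, List.length_cons]
      by_cases h2 : m % 2 = 0
      · simp only [if_pos h2, List.cons.injEq, true_and]
        rw [ih hwB]
        exact ⟨fun h => key h2 h, fun h => (key2 h).2⟩
      · simp only [if_neg h2]
        constructor
        · intro h; injection h with hh _; exact XB.noConfusion hh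
        · intro h; exact absurd (key2 h).1 h2
    | one =>
      simp only [mact, lact, lres, List.length_cons]
      by_cases h2 : m % 2 = 0
      · simp only [if_pos h2, List.cons.injEq, true_and]
        rw [ih hwB]
        have heq : (m + 1) / 2 = m / 2 := by omega
        rw [heq]
        exact ⟨fun h => key h2 h, fun h => (key2 h).2⟩
      · simp only [if_neg h2]
        constructor
        · intro h; injection h with hh _; exact XB.noConfusion hh
        · intro h; exact absurd (key2 h).1 h2
    | B => exact absurd rfl hxB

/-- Restriction of z^(2^n * k) at a B-free word of length n is z^k. -/
lemma mres_fix : ∀ (w : List XB), XB.B ∉ w → ∀ k : ℤ,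
    mres ((2:ℤ) ^ w.length * k) w = k := by
  intro w
  induction w with
  | nil => intro _ k; simp [mres]
  | cons x w ih =>
    intro hB k
    have hwB : XB.B ∉ w := fun h => hB (by simp [h])
    have hp : (2:ℤ) ^ (x :: w).length * k = 2 * (2 ^ w.length * k) := by
      simp [pow_succ]; ring
    cases x with
    | zero =>
      show mres (lres ((2:ℤ) ^ (XB.zero :: w).length * k) XB.zero) w = k
      have : lres ((2:ℤ) ^ (XB.zero :: w).length * k) XB.zero = 2 ^ w.length * k := by
        simp only [lres, hp]; omega
      rw [this]; exact ih hwB k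
    | one =>
      show mres (lres ((2:ℤ) ^ (XB.one :: w).length * k) XB.one) w = k
      have : lres ((2:ℤ) ^ (XB.one :: w).length * k) XB.one = 2 ^ w.length * k := by
        simp only [lres, hp]; omega
      rw [this]; exact ih hwB k
    | B => exact absurd (by simp) hB

lemma mact_concat_B (m : ℤ) (w : List XB) :
    mact m (w ++ [XB.B]) = mact m w ++ [XB.B] := by
  rw [mact_append]; rfl

lemma mres_concat_B (m : ℤ) (w v : List XB) :
    mres m (w ++ XB.B :: v) = 0 := by
  rw [mres_append]
  show mres (lres (mres m w) XB.B) v = 0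
  rw [lres]; exact mres_zero v

lemma first_B : ∀ (α : List XB), XB.B ∈ α →
    ∃ β γ, α = β ++ XB.B :: γ ∧ XB.B ∉ β := by
  intro α
  induction α with
  | nil => intro h; exact absurd h (by simp)
  | cons x w ih =>
    intro h
    cases x with
    | B => exact ⟨[], w, rfl, by simp⟩
    | zero =>
      obtain ⟨β, γ, h1, h2⟩ := ih (by simpa using h)
      exact ⟨XB.zero :: β, γ, by simp [h1], by simp [h2]⟩
    | one =>
      obtain ⟨β, γ, h1, h2⟩ := ih (by simpa using h)
      exact ⟨XB.one :: β, γ, by simp [h1], by simp [h2]⟩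

/-- The action/restriction of z^m on single letters. -/
lemma key1 (SS : SelfSimilar (Multiplicative ℤ) XB)
    (h0 : SS.act oz [XB.zero] = [XB.one]) (h0r : SS.res oz [XB.zero] = 1)
    (h1 : SS.act oz [XB.one] = [XB.zero]) (h1r : SS.res oz [XB.one] = oz)
    (hB : SS.act oz [XB.B] = [XB.B]) (hBr : SS.res oz [XB.B] = 1) :
    ∀ (m : ℤ) (x : XB),
      SS.act (oz ^ m) [x] = [lact m x] ∧ SS.res (oz ^ m) [x] = oz ^ lres m x := by
  -- facts about the inverse generator
  have e1 : SS.act oz⁻¹ [XB.one] = [XB.zero] := by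
    have h := SS.act_mul oz⁻¹ oz [XB.zero]
    rw [inv_mul_cancel, SS.act_one, h0] at h
    exact h.symm
  have e0 : SS.act oz⁻¹ [XB.zero] = [XB.one] := by
    have h := SS.act_mul oz⁻¹ oz [XB.one]
    rw [inv_mul_cancel, SS.act_one, h1] at h
    exact h.symm
  have eB : SS.act oz⁻¹ [XB.B] = [XB.B] := by
    have h := SS.act_mul oz⁻¹ oz [XB.B]
    rw [inv_mul_cancel, SS.act_one, hB] at h
    exact h.symm
  have r1 : SS.res oz⁻¹ [XB.one] = 1 := by
    have h := SS.res_mul oz⁻¹ oz [XB.zero]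
    rw [inv_mul_cancel, SS.res_one, h0, h0r, mul_one] at h
    exact h.symm
  have r0 : SS.res oz⁻¹ [XB.zero] = oz⁻¹ := by
    have h := SS.res_mul oz⁻¹ oz [XB.one]
    rw [inv_mul_cancel, SS.res_one, h1, h1r] at h
    exact eq_inv_of_mul_eq_one_left h.symm
  have rB : SS.res oz⁻¹ [XB.B] = 1 := by
    have h := SS.res_mul oz⁻¹ oz [XB.B]
    rw [inv_mul_cancel, SS.res_one, hB, hBr, mul_one] at h
    exact h.symm
  have hozmul : ∀ a : ℤ, oz * oz ^ a = oz ^ (a + 1) := fun a => by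
    rw [zpow_add_one, mul_comm]
  have hozcongr : ∀ a b : ℤ, a = b → oz ^ a = oz ^ b := fun a b h => by rw [h]
  intro m
  induction m using Int.induction_on with
  | zero =>
    intro x
    cases x <;> simp [lact, lres, SS.act_one, SS.res_one]
  | succ n ih =>
    intro x
    have hsplit : oz ^ ((n : ℤ) + 1) = oz * oz ^ (n : ℤ) := by
      rw [zpow_add_one, mul_comm]
    have ha := (ih x).1
    have hr := (ih x).2
    rw [hsplit, SS.act_mul, SS.res_mul, ha, hr]
    cases x with
    | zero =>
      by_cases h2 : (n : ℤ) % 2 = 0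
      · have l1 : lact (n : ℤ) XB.zero = XB.zero := by simp [lact, h2]
        have l2 : lact ((n : ℤ) + 1) XB.zero = XB.one := by
          simp only [lact, if_neg (by omega : ¬((n : ℤ) + 1) % 2 = 0)]
        rw [l1, l2, h0, h0r, one_mul]
        exact ⟨rfl, hozcongr _ _ (by simp only [lres]; omega)⟩
      · have l1 : lact (n : ℤ) XB.zero = XB.one := by simp [lact, h2]
        have l2 : lact ((n : ℤ) + 1) XB.zero = XB.zero := by
          simp only [lact, if_pos (by omega : ((n : ℤ) + 1) % 2 = 0)]
        rw [l1, l2, h1, h1r, hozmul]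
        exact ⟨rfl, hozcongr _ _ (by simp only [lres]; omega)⟩
    | one =>
      by_cases h2 : (n : ℤ) % 2 = 0
      · have l1 : lact (n : ℤ) XB.one = XB.one := by simp [lact, h2]
        have l2 : lact ((n : ℤ) + 1) XB.one = XB.zero := by
          simp only [lact, if_neg (by omega : ¬((n : ℤ) + 1) % 2 = 0)]
        rw [l1, l2, h1, h1r, hozmul]
        exact ⟨rfl, hozcongr _ _ (by simp only [lres]; omega)⟩
      · have l1 : lact (n : ℤ) XB.one = XB.zero := by simp [lact, h2]
        have l2 : lact ((n : ℤ) + 1) XB.one = XB.one := by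
          simp only [lact, if_pos (by omega : ((n : ℤ) + 1) % 2 = 0)]
        rw [l1, l2, h0, h0r, one_mul]
        exact ⟨rfl, hozcongr _ _ (by simp only [lres]; omega)⟩
    | B =>
      rw [show lact (n : ℤ) XB.B = XB.B from rfl,
        show lact ((n : ℤ) + 1) XB.B = XB.B from rfl, hB, hBr, one_mul]
      exact ⟨rfl, rfl⟩
  | pred n ih =>
    intro x
    have hsplit : oz ^ (-(n : ℤ) - 1) = oz⁻¹ * oz ^ (-(n : ℤ)) := by
      rw [zpow_sub_one, mul_comm]
    have ha := (ih x).1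
    have hr := (ih x).2
    have hozinv : ∀ a : ℤ, oz⁻¹ * oz ^ a = oz ^ (a - 1) := fun a => by
      rw [zpow_sub_one, mul_comm]
    rw [hsplit, SS.act_mul, SS.res_mul, ha, hr]
    set m : ℤ := -(n : ℤ) with hm
    cases x with
    | zero =>
      by_cases h2 : m % 2 = 0
      · have l1 : lact m XB.zero = XB.zero := by simp [lact, h2]
        have l2 : lact (m - 1) XB.zero = XB.one := by
          simp only [lact, if_neg (by omega : ¬(m - 1) % 2 = 0)]
        rw [l1, l2, e0, r0, hozinv]
        exact ⟨rfl, hozcongr _ _ (by simp only [lres]; omega)⟩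
      · have l1 : lact m XB.zero = XB.one := by simp [lact, h2]
        have l2 : lact (m - 1) XB.zero = XB.zero := by
          simp only [lact, if_pos (by omega : (m - 1) % 2 = 0)]
        rw [l1, l2, e1, r1, one_mul]
        exact ⟨rfl, hozcongr _ _ (by simp only [lres]; omega)⟩
    | one =>
      by_cases h2 : m % 2 = 0
      · have l1 : lact m XB.one = XB.one := by simp [lact, h2]
        have l2 : lact (m - 1) XB.one = XB.zero := by
          simp only [lact, if_neg (by omega : ¬(m - 1) % 2 = 0)]
        rw [l1, l2, e1, r1, one_mul]
        exact ⟨rfl, hozcongr _ _ (by simp only [lres]; omega)⟩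
      · have l1 : lact m XB.one = XB.zero := by simp [lact, h2]
        have l2 : lact (m - 1) XB.one = XB.one := by
          simp only [lact, if_pos (by omega : (m - 1) % 2 = 0)]
        rw [l1, l2, e0, r0, hozinv]
        exact ⟨rfl, hozcongr _ _ (by simp only [lres]; omega)⟩
    | B =>
      rw [show lact m XB.B = XB.B from rfl,
        show lact (m - 1) XB.B = XB.B from rfl, eB, rB, one_mul]
      exact ⟨rfl, rfl⟩

/-- The full model: `SS.act (oz^m)` is `mact m` and `SS.res (oz^m)` is `oz ^ mres m ·`. -/
lemma model (SS : SelfSimilar (Multiplicative ℤ) XB)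
    (h0 : SS.act oz [XB.zero] = [XB.one]) (h0r : SS.res oz [XB.zero] = 1)
    (h1 : SS.act oz [XB.one] = [XB.zero]) (h1r : SS.res oz [XB.one] = oz)
    (hB : SS.act oz [XB.B] = [XB.B]) (hBr : SS.res oz [XB.B] = 1) :
    ∀ (w : List XB) (m : ℤ),
      SS.act (oz ^ m) w = mact m w ∧ SS.res (oz ^ m) w = oz ^ mres m w := by
  have k1 := key1 SS h0 h0r h1 h1r hB hBr
  intro w
  induction w with
  | nil =>
    intro m
    constructor
    · exact List.length_eq_zero_iff.mp (by rw [SS.length_act]; rfl)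
    · rw [SS.res_nil]; rfl
  | cons x w ih =>
    intro m
    have hx := k1 m x
    have hcons : (x :: w : List XB) = [x] ++ w := rfl
    constructor
    · rw [hcons, SS.act_append, hx.1, hx.2, (ih (lres m x)).1]; rfl
    · rw [hcons, SS.res_append, hx.2, (ih (lres m x)).2]; rfl

lemma SF_iff (SS : SelfSimilar (Multiplicative ℤ) XB)
    (hmod : ∀ (w : List XB) (m : ℤ),
      SS.act (oz ^ m) w = mact m w ∧ SS.res (oz ^ m) w = oz ^ mres m w)
    (m : ℤ) (α : List XB) :
    α ∈ SF SS (oz ^ m) ↔ (mact m α = α ∧ mres m α = 0) := by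
  show (SS.act (oz ^ m) α = α ∧ SS.res (oz ^ m) α = 1) ↔ _
  rw [(hmod α m).1, (hmod α m).2, ozpow_eq_one]

lemma SF_char (SS : SelfSimilar (Multiplicative ℤ) XB)
    (hmod : ∀ (w : List XB) (m : ℤ),
      SS.act (oz ^ m) w = mact m w ∧ SS.res (oz ^ m) w = oz ^ mres m w)
    {m : ℤ} (hm : m ≠ 0) (α : List XB) :
    α ∈ SF SS (oz ^ m) ↔
      ∃ β γ, α = β ++ XB.B :: γ ∧ XB.B ∉ β ∧ (2:ℤ) ^ β.length ∣ m := by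
  rw [SF_iff SS hmod m α]
  constructor
  · rintro ⟨hact, hres⟩
    have hBmem : XB.B ∈ α := by
      by_contra hBn
      obtain ⟨k, hk⟩ := (mact_fix_iff α hBn m).1 hact
      subst hk
      rw [mres_fix α hBn k] at hres
      subst hres
      simp at hm
    obtain ⟨β, γ, rfl, hβ⟩ := first_B α hBmem
    refine ⟨β, γ, rfl, hβ, ?_⟩
    rw [mact_append] at hact
    have hfix : mact m β = β :=
      List.append_inj_left hact (mact_length m β)
    exact (mact_fix_iff β hβ m).1 hfix
  · rintro ⟨β, γ, rfl, hβ, hd⟩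
    constructor
    · rw [mact_append, (mact_fix_iff β hβ m).2 hd]
      congr 1
      show lact (mres m β) XB.B :: mact (lres (mres m β) XB.B) γ = XB.B :: γ
      rw [show lact (mres m β) XB.B = XB.B from rfl,
        show lres (mres m β) XB.B = (0:ℤ) from rfl, mact_zero]
    · exact mres_concat_B m β γ

lemma MSF_char (SS : SelfSimilar (Multiplicative ℤ) XB)
    (hmod : ∀ (w : List XB) (m : ℤ),
      SS.act (oz ^ m) w = mact m w ∧ SS.res (oz ^ m) w = oz ^ mres m w)
    {m : ℤ} (hm : m ≠ 0) (α : List XB) :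
    α ∈ MSF SS (oz ^ m) ↔
      ∃ β, α = β ++ [XB.B] ∧ XB.B ∉ β ∧ (2:ℤ) ^ β.length ∣ m := by
  constructor
  · rintro ⟨hSF, hmin⟩
    obtain ⟨β, γ, rfl, hβ, hd⟩ := (SF_char SS hmod hm _).1 hSF
    have hpre : β ++ [XB.B] <+: β ++ XB.B :: γ := ⟨γ, by simp⟩
    have heq : β ++ [XB.B] = β ++ XB.B :: γ := by
      by_contra hne
      exact hmin _ hpre hne ((SF_char SS hmod hm _).2 ⟨β, [], rfl, hβ, hd⟩)
    exact ⟨β, heq.symm, hβ, hd⟩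
  · rintro ⟨β, rfl, hβ, hd⟩
    refine ⟨(SF_char SS hmod hm _).2 ⟨β, [], rfl, hβ, hd⟩, ?_⟩
    rintro δ hpre hne hδSF
    obtain ⟨β', γ', rfl, hβ', _⟩ := (SF_char SS hmod hm _).1 hδSF
    have hlen : (β' ++ XB.B :: γ').length ≤ β.length := by
      have h1 : (β' ++ XB.B :: γ').length ≤ (β ++ [XB.B]).length := hpre.length_le
      have h2 : (β' ++ XB.B :: γ').length ≠ (β ++ [XB.B]).length := by
        intro h; exact hne (hpre.eq_of_length h)
      have h3 : (β ++ [XB.B]).length = β.length + 1 := by simp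
      omega
    have hδβ : (β' ++ XB.B :: γ') <+: β :=
      List.prefix_of_prefix_length_le hpre (List.prefix_append β [XB.B]) hlen
    exact hβ (hδβ.subset (by simp))

/-- For the modified odometer self-similar group `(ℤ, {0,1,B})` determined by
`z·0 = 1, z|_0 = e`, `z·1 = 0, z|_1 = z`, `z·B = B, z|_B = e`: for every nonzero
`m`, `MSF_{z^m}` is finite; for `m > 0` every minimal strongly fixed word of `z^m`
has the form `βB` with `β ∈ {0,1}*` and `z^m·β = β`; and for `β ∈ {0,1}*`,
`z^m·β = β` holds iff `2^{|β|}` divides `m`, whence `2^{|β|} ≤ m`. -/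
theorem stmt19 (SS : SelfSimilar (Multiplicative ℤ) XB)
    (h0 : SS.act oz [XB.zero] = [XB.one]) (h0r : SS.res oz [XB.zero] = 1)
    (h1 : SS.act oz [XB.one] = [XB.zero]) (h1r : SS.res oz [XB.one] = oz)
    (hB : SS.act oz [XB.B] = [XB.B]) (hBr : SS.res oz [XB.B] = 1) :
    (∀ m : ℤ, m ≠ 0 → (MSF SS (oz ^ m)).Finite) ∧
    (∀ m : ℤ, 0 < m → ∀ α ∈ MSF SS (oz ^ m),
      ∃ β : List XB, α = β ++ [XB.B] ∧ XB.B ∉ β ∧ SS.act (oz ^ m) β = β) ∧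
    (∀ m : ℤ, 0 < m → ∀ β : List XB, XB.B ∉ β →
      (SS.act (oz ^ m) β = β ↔ ((2 : ℤ) ^ β.length ∣ m))) ∧
    (∀ m : ℤ, 0 < m → ∀ β : List XB, XB.B ∉ β → SS.act (oz ^ m) β = β →
      (2 : ℤ) ^ β.length ≤ m) := by

  have hmod := model SS h0 h0r h1 h1r hB hBr
  refine ⟨?_, ?_, ?_, ?_⟩
  · -- finiteness
    intro m hm
    apply Set.Finite.subset (List.finite_length_le XB (m.natAbs + 1))
    intro α hα
    obtain ⟨β, rfl, hβ, hd⟩ := (MSF_char SS hmod hm α).1 hα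
    have h1 : (2:ℤ) ^ β.length ≤ |m| :=
      Int.le_of_dvd (abs_pos.mpr hm) ((dvd_abs _ _).mpr hd)
    have h2 : (β.length : ℤ) < 2 ^ β.length := by
      have := Nat.lt_two_pow_self (n := β.length)
      exact_mod_cast this
    have h3 : |m| = (m.natAbs : ℤ) := Int.abs_eq_natAbs m
    simp only [Set.mem_setOf_eq, List.length_append, List.length_singleton]
    omega
  · -- shape of MSF elements
    intro m hm α hα
    obtain ⟨β, rfl, hβ, hd⟩ := (MSF_char SS hmod (by omega : m ≠ 0) α).1 hα
    exact ⟨β, rfl, hβ, by rw [(hmod β m).1]; exact (mact_fix_iff β hβ m).2 hd⟩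
  · -- fixed iff divisible
    intro m _ β hβ
    rw [(hmod β m).1]
    exact mact_fix_iff β hβ m
  · -- bound
    intro m hm β hβ hfix
    rw [(hmod β m).1] at hfix
    exact Int.le_of_dvd hm ((mact_fix_iff β hβ m).1 hfix)
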